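/- (Proposition 2.) For every density matrix ρ on the N-cell tensor product space ⊗_{i=1}^N ℂ^{n_i}, the quantum state advantage is bounded by the number of cells: Γ_C(ρ) ≤ N. -/

import Mathlib

open Matrix BigOperators
open scoped ComplexOrder Kronecker
set_option linter.unusedSectionVars false

noncomputable section

/-- Commutator of two square matrices. -/
def mComm {d : Type*} [Fintype d] (A B : Matrix d d ℂ) : Matrix d d ℂ := A * B - B * A

/-- Commutation matrix `γ_C(ρ, M)` built from the square root `s = √ρ` of a density
matrix, with entries `γ_C(ρ,M)_{μν} = −tr([M_μ,√ρ][M_ν,√ρ])`. -/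
def gammaC {d ι : Type*} [Fintype d] (s : Matrix d d ℂ) (M : ι → Matrix d d ℂ) :
    Matrix ι ι ℝ :=
  fun μ ν => (-(Matrix.trace (mComm (M μ) s * mComm (M ν) s))).re

/-- Largest eigenvalue of a (finite, real symmetric) matrix. -/
def maxEig {ι : Type*} [Fintype ι] (G : Matrix ι ι ℝ) : ℝ :=
  sSup {c : ℝ | ∃ v : ι → ℝ, v ≠ 0 ∧ G.mulVec v = c • v}

/-- The operator on the `N`-cell space `⊗_j ℂ^{n_j}` acting as `A` on cell `i`
and as the identity on all other cells. -/
def localOp {N : ℕ} (n : Fin N → ℕ) (i : Fin N)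
    (A : Matrix (Fin (n i)) (Fin (n i)) ℂ) :
    Matrix ((j : Fin N) → Fin (n j)) ((j : Fin N) → Fin (n j)) ℂ :=
  fun x y => A (x i) (y i) * ∏ j ∈ Finset.univ.erase i, (if x j = y j then 1 else 0)

/-- The local observable set built from a choice `A i α` of Hermitian bases of the
individual cells: the observable `M_{(i,α)}` acts as `A i α` on cell `i` and as the
identity on all other cells. -/
def obsFamily {N : ℕ} (n : Fin N → ℕ)
    (A : ∀ i : Fin N, Fin (n i ^ 2) → Matrix (Fin (n i)) (Fin (n i)) ℂ) :
    ((i : Fin N) × Fin (n i ^ 2)) →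
      Matrix ((j : Fin N) → Fin (n j)) ((j : Fin N) → Fin (n j)) ℂ :=
  fun μ => localOp n μ.1 (A μ.1 μ.2)

/-! ### Auxiliary material -/

namespace QSAProof

section Frobenius

variable {d : Type*} [Fintype d] [DecidableEq d]

/-- The matrix viewed as a vector in Euclidean space. -/
def toEuc (X : Matrix d d ℂ) : EuclideanSpace ℂ (d × d) :=
  WithLp.toLp 2 (fun p : d × d => X p.1 p.2)

lemma toEuc_sum {ι : Type*} (t : Finset ι) (f : ι → Matrix d d ℂ) :
    toEuc (∑ i ∈ t, f i) = ∑ i ∈ t, toEuc (f i) := by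
  ext p
  simp [toEuc, Matrix.sum_apply]

lemma toEuc_norm_sq (X : Matrix d d ℂ) :
    ‖toEuc X‖ ^ 2 = (Matrix.trace (X * Xᴴ)).re := by
  rw [EuclideanSpace.norm_eq, Real.sq_sqrt (by positivity)]
  have lhs : ∑ i : d × d, ‖toEuc X i‖ ^ 2 = ∑ a : d, ∑ b : d, Complex.normSq (X a b) := by
    rw [Fintype.sum_prod_type]
    refine Finset.sum_congr rfl fun a _ => Finset.sum_congr rfl fun b _ => ?_
    rw [← Complex.sq_norm]
    rfl
  have rhs : (Matrix.trace (X * Xᴴ)).re = ∑ a : d, ∑ b : d, Complex.normSq (X a b) := by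
    simp only [Matrix.trace, Matrix.diag_apply, Matrix.mul_apply, Matrix.conjTranspose_apply,
      RCLike.star_def]
    rw [Complex.re_sum]
    refine Finset.sum_congr rfl fun a _ => ?_
    rw [Complex.re_sum]
    refine Finset.sum_congr rfl fun b _ => ?_
    rw [Complex.mul_conj, Complex.ofReal_re]
  rw [lhs, rhs]

lemma trace_mul_conjTranspose_re_nonneg (X : Matrix d d ℂ) :
    0 ≤ (Matrix.trace (X * Xᴴ)).re := by
  rw [← toEuc_norm_sq]; positivity

lemma trace_psd_mul_psd_re_nonneg {X Y : Matrix d d ℂ}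
    (hX : X.PosSemidef) (hY : Y.PosSemidef) : 0 ≤ (Matrix.trace (X * Y)).re := by
  obtain ⟨B, rfl⟩ : ∃ B : Matrix d d ℂ, X = Bᴴ * B := by
    open scoped MatrixOrder in
    obtain ⟨B, hB⟩ := CStarAlgebra.nonneg_iff_eq_star_mul_self.mp hX.nonneg
    exact ⟨B, by rw [hB, Matrix.star_eq_conjTranspose]⟩
  have h1 : Matrix.trace (Bᴴ * B * Y) = Matrix.trace (B * Y * Bᴴ) :=
    (Matrix.trace_mul_cycle B Y Bᴴ).symm
  have h2 : (B * Y * Bᴴ).PosSemidef := hY.mul_mul_conjTranspose_same B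
  obtain ⟨C, hC⟩ : ∃ C : Matrix d d ℂ, B * Y * Bᴴ = Cᴴ * C := by
    open scoped MatrixOrder in
    obtain ⟨C, hC⟩ := CStarAlgebra.nonneg_iff_eq_star_mul_self.mp h2.nonneg
    exact ⟨C, by rw [hC, Matrix.star_eq_conjTranspose]⟩
  rw [h1, hC]
  have : Cᴴ * C = Cᴴ * (Cᴴ)ᴴ := by rw [Matrix.conjTranspose_conjTranspose]
  rw [this]
  exact trace_mul_conjTranspose_re_nonneg _

end Frobenius

section MComm

variable {d : Type*} [Fintype d] [DecidableEq d]

lemma mComm_add_left (X Y s : Matrix d d ℂ) :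
    mComm (X + Y) s = mComm X s + mComm Y s := by
  simp only [mComm, add_mul, mul_add]; abel

lemma mComm_sum_left {ι : Type*} (t : Finset ι) (f : ι → Matrix d d ℂ) (s : Matrix d d ℂ) :
    mComm (∑ i ∈ t, f i) s = ∑ i ∈ t, mComm (f i) s := by
  simp only [mComm, Finset.sum_mul, Finset.mul_sum, ← Finset.sum_sub_distrib]

lemma mComm_smul_left (c : ℂ) (X s : Matrix d d ℂ) :
    mComm (c • X) s = c • mComm X s := by
  simp only [mComm, smul_mul_assoc, mul_smul_comm, smul_sub]

lemma mComm_smul_one (c : ℂ) (s : Matrix d d ℂ) :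
    mComm (c • (1 : Matrix d d ℂ)) s = 0 := by
  simp [mComm, smul_mul_assoc, mul_smul_comm]

lemma mComm_conjTranspose {X s : Matrix d d ℂ} (hX : X.IsHermitian) (hs : s.IsHermitian) :
    (mComm X s)ᴴ = -mComm X s := by
  simp only [mComm, conjTranspose_sub, conjTranspose_mul, hX.eq, hs.eq]
  abel

end MComm

section LocalOp

variable {N : ℕ} {n : Fin N → ℕ}

/-- The equivalence splitting off the `i`-th coordinate. -/
def splitAt (n : Fin N → ℕ) (i : Fin N) :
    ((j : Fin N) → Fin (n j)) ≃ (Fin (n i) × ((j : {j : Fin N // j ≠ i}) → Fin (n j))) :=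
  Equiv.piSplitAt i _

lemma localOp_eq_submatrix (i : Fin N) (A : Matrix (Fin (n i)) (Fin (n i)) ℂ) :
    localOp n i A =
      (A ⊗ₖ (1 : Matrix ((j : {j : Fin N // j ≠ i}) → Fin (n j))
        ((j : {j : Fin N // j ≠ i}) → Fin (n j)) ℂ)).submatrix (splitAt n i) (splitAt n i) := by
  ext x y
  simp only [localOp, Matrix.submatrix_apply, Matrix.kroneckerMap_apply, splitAt,
    Equiv.piSplitAt, Equiv.coe_fn_mk, Matrix.one_apply]
  congr 1
  by_cases h : (fun (j : {j : Fin N // j ≠ i}) => x j.1) = fun (j : {j : Fin N // j ≠ i}) => y j.1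
  · rw [if_pos h]
    refine Finset.prod_eq_one fun j hj => ?_
    rw [if_pos (congrFun h ⟨j, (Finset.mem_erase.mp hj).1⟩)]
  · rw [if_neg h]
    have : ∃ j : {j : Fin N // j ≠ i}, x j.1 ≠ y j.1 := by
      by_contra hc
      push_neg at hc
      exact h (funext fun j => hc j)
    obtain ⟨j, hj⟩ := this
    exact Finset.prod_eq_zero (Finset.mem_erase.mpr ⟨j.2, Finset.mem_univ _⟩) (if_neg hj)

lemma localOp_one (i : Fin N) : localOp n i (1 : Matrix (Fin (n i)) (Fin (n i)) ℂ) = 1 := by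
  rw [localOp_eq_submatrix, Matrix.one_kronecker_one, Matrix.submatrix_one_equiv]

lemma localOp_mul (i : Fin N) (A B : Matrix (Fin (n i)) (Fin (n i)) ℂ) :
    localOp n i A * localOp n i B = localOp n i (A * B) := by
  rw [localOp_eq_submatrix, localOp_eq_submatrix, localOp_eq_submatrix,
    Matrix.submatrix_mul_equiv, ← Matrix.mul_kronecker_mul, Matrix.one_mul]

lemma localOp_add (i : Fin N) (A B : Matrix (Fin (n i)) (Fin (n i)) ℂ) :
    localOp n i (A + B) = localOp n i A + localOp n i B := by
  ext x y
  simp [localOp, add_mul]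

lemma localOp_sub (i : Fin N) (A B : Matrix (Fin (n i)) (Fin (n i)) ℂ) :
    localOp n i (A - B) = localOp n i A - localOp n i B := by
  ext x y
  simp [localOp, sub_mul]

lemma localOp_smul (i : Fin N) (c : ℂ) (A : Matrix (Fin (n i)) (Fin (n i)) ℂ) :
    localOp n i (c • A) = c • localOp n i A := by
  ext x y
  simp [localOp, mul_assoc]

lemma localOp_sum (i : Fin N) {ι : Type*} (t : Finset ι)
    (f : ι → Matrix (Fin (n i)) (Fin (n i)) ℂ) :
    localOp n i (∑ α ∈ t, f α) = ∑ α ∈ t, localOp n i (f α) := by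
  ext x y
  simp [localOp, Finset.sum_mul, Matrix.sum_apply]

lemma localOp_conjTranspose (i : Fin N) (A : Matrix (Fin (n i)) (Fin (n i)) ℂ) :
    (localOp n i A)ᴴ = localOp n i Aᴴ := by
  ext x y
  simp only [Matrix.conjTranspose_apply, localOp]
  rw [star_mul', star_prod]
  congr 1
  refine Finset.prod_congr rfl fun j _ => ?_
  by_cases h : x j = y j
  · simp [h]
  · rw [if_neg (fun hc => h hc.symm), if_neg h, star_zero]

lemma localOp_isHermitian (i : Fin N) {A : Matrix (Fin (n i)) (Fin (n i)) ℂ}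
    (hA : A.IsHermitian) : (localOp n i A).IsHermitian := by
  show (localOp n i A)ᴴ = localOp n i A
  rw [localOp_conjTranspose, hA.eq]

lemma kronecker_one_posSemidef {m p : Type*} [Fintype m] [DecidableEq m]
    [Fintype p] [DecidableEq p] {E : Matrix m m ℂ} (hE : E.PosSemidef) :
    (E ⊗ₖ (1 : Matrix p p ℂ)).PosSemidef := by
  refine Matrix.posSemidef_iff_dotProduct_mulVec.mpr ⟨?_, ?_⟩
  · have h : (E ⊗ₖ (1 : Matrix p p ℂ))ᴴ = Eᴴ ⊗ₖ (1 : Matrix p p ℂ) := by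
      ext ⟨a, u⟩ ⟨b, w⟩
      simp only [Matrix.conjTranspose_apply, Matrix.kroneckerMap_apply,
        Matrix.one_apply]
      rw [star_mul']
      rw [show (star (if w = u then (1:ℂ) else 0) = if u = w then (1:ℂ) else 0) from by
        simp [apply_ite (star : ℂ → ℂ), eq_comm]]
    show (E ⊗ₖ (1 : Matrix p p ℂ))ᴴ = E ⊗ₖ 1
    rw [h, hE.1.eq]
  · intro x
    have key : star x ⬝ᵥ (E ⊗ₖ (1 : Matrix p p ℂ)) *ᵥ x
        = ∑ u : p, star (fun a => x (a, u)) ⬝ᵥ (E *ᵥ fun a => x (a, u)) := by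
      simp only [dotProduct, Matrix.mulVec, Matrix.kroneckerMap_apply,
        Matrix.one_apply, Pi.star_apply, Fintype.sum_prod_type, mul_ite, ite_mul,
        mul_one, mul_zero, zero_mul, Finset.sum_ite_eq, Finset.mem_univ, if_true]
      rw [Finset.sum_comm]
    rw [key]
    exact Finset.sum_nonneg fun u _ => hE.dotProduct_mulVec_nonneg _

lemma localOp_posSemidef (i : Fin N) {E : Matrix (Fin (n i)) (Fin (n i)) ℂ}
    (hE : E.PosSemidef) : (localOp n i E).PosSemidef := by
  rw [localOp_eq_submatrix]
  exact (kronecker_one_posSemidef hE).submatrix _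

end LocalOp


section Shift

lemma exists_shift {k : Type*} [Fintype k] [DecidableEq k] [Nonempty k]
    {C : Matrix k k ℂ} (hC : C.IsHermitian) :
    ∃ c m : ℝ,
      (((m : ℂ) • (1 : Matrix k k ℂ) - (C - (c : ℂ) • 1) * (C - (c : ℂ) • 1)).PosSemidef) ∧
      2 * m ≤ (Matrix.trace (C * C)).re := by
  classical
  set lam := hC.eigenvalues with hlam
  set U : Matrix k k ℂ := (hC.eigenvectorUnitary : Matrix k k ℂ) with hUdef
  have hUU : U * star U = 1 := Matrix.mem_unitaryGroup_iff.mp hC.eigenvectorUnitary.2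
  have hUU' : star U * U = 1 := Matrix.mem_unitaryGroup_iff'.mp hC.eigenvectorUnitary.2
  set Dl : Matrix k k ℂ := Matrix.diagonal (RCLike.ofReal ∘ lam) with hDl
  have hspec : C = U * Dl * star U := hC.spectral_theorem
  have conj_mul : ∀ X Y : Matrix k k ℂ,
      (U * X * star U) * (U * Y * star U) = U * (X * Y) * star U := by
    intro X Y
    simp only [Matrix.mul_assoc]
    rw [← Matrix.mul_assoc (star U) U (Y * star U), hUU', Matrix.one_mul]
  have conj_smul_one : ∀ t : ℝ, U * ((t : ℂ) • (1 : Matrix k k ℂ)) * star U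
      = (t : ℂ) • (1 : Matrix k k ℂ) := by
    intro t
    rw [mul_smul_comm, smul_mul_assoc, Matrix.mul_one, hUU]
  set Mx := Finset.univ.sup' Finset.univ_nonempty lam with hMx
  set mn := Finset.univ.inf' Finset.univ_nonempty lam with hmn
  set c : ℝ := (Mx + mn) / 2 with hc
  set m : ℝ := ((Mx - mn) / 2) ^ 2 with hm
  have hbound : ∀ j : k, mn ≤ lam j ∧ lam j ≤ Mx := fun j =>
    ⟨Finset.inf'_le lam (Finset.mem_univ j), Finset.le_sup' lam (Finset.mem_univ j)⟩
  -- trace of C * C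
  have htr : (Matrix.trace (C * C)).re = ∑ j, lam j ^ 2 := by
    have h1 : C * C = U * (Dl * Dl) * star U := by
      rw [hspec, conj_mul]
    have h2 : Matrix.trace (C * C) = Matrix.trace (Dl * Dl) := by
      rw [h1, Matrix.trace_mul_cycle, ← Matrix.mul_assoc, hUU', Matrix.one_mul]
    rw [h2, hDl, Matrix.diagonal_mul_diagonal, Matrix.trace_diagonal, Complex.re_sum]
    refine Finset.sum_congr rfl fun j _ => ?_
    rw [show (RCLike.ofReal ∘ lam) j = ((lam j : ℝ) : ℂ) from rfl, ← Complex.ofReal_mul,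
      Complex.ofReal_re, sq]
  refine ⟨c, m, ?_, ?_⟩
  · -- positive semidefiniteness
    have hc1 : C - (c : ℂ) • 1 = U * (Dl - (c : ℂ) • 1) * star U := by
      rw [Matrix.mul_sub, Matrix.sub_mul, ← hspec, conj_smul_one]
    have hsq : (C - (c : ℂ) • 1) * (C - (c : ℂ) • 1)
        = U * ((Dl - (c : ℂ) • 1) * (Dl - (c : ℂ) • 1)) * star U := by
      rw [hc1, conj_mul]
    have hdd : (Dl - (c : ℂ) • 1) = Matrix.diagonal (fun j => ((lam j - c : ℝ) : ℂ)) := by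
      ext a b
      by_cases hab : a = b
      · subst hab
        simp [hDl, Matrix.diagonal_apply_eq, Matrix.one_apply, Function.comp]
      · simp [hDl, Matrix.diagonal_apply_ne _ hab, Matrix.one_apply, hab]
    have hkey : (m : ℂ) • (1 : Matrix k k ℂ) - (C - (c : ℂ) • 1) * (C - (c : ℂ) • 1)
        = U * Matrix.diagonal (fun j => ((m - (lam j - c) ^ 2 : ℝ) : ℂ)) * star U := by
      rw [hsq, ← conj_smul_one m, ← Matrix.sub_mul, ← Matrix.mul_sub]
      congr 2
      rw [hdd, Matrix.diagonal_mul_diagonal]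
      ext a b
      by_cases hab : a = b
      · subst hab
        simp [Matrix.diagonal_apply_eq, Matrix.one_apply]
        push_cast
        ring_nf
      · simp [Matrix.diagonal_apply_ne _ hab, Matrix.one_apply, hab]
    rw [hkey]
    have hdiagpsd : (Matrix.diagonal (fun j => ((m - (lam j - c) ^ 2 : ℝ) : ℂ))).PosSemidef := by
      refine Matrix.posSemidef_diagonal_iff.mpr fun j => ?_
      rw [Complex.zero_le_real]
      obtain ⟨hj1, hj2⟩ := hbound j
      rw [hm, hc]
      nlinarith
    have := hdiagpsd.mul_mul_conjTranspose_same U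
    rwa [← Matrix.star_eq_conjTranspose] at this
  · -- 2 * m ≤ trace
    rw [htr]
    obtain ⟨kM, -, hkM⟩ := Finset.exists_mem_eq_sup' Finset.univ_nonempty lam
    obtain ⟨km, -, hkm⟩ := Finset.exists_mem_eq_inf' Finset.univ_nonempty lam
    by_cases hMm : Mx = mn
    · have : m = 0 := by rw [hm, hMm]; ring
      rw [this]
      have : (0:ℝ) ≤ ∑ j, lam j ^ 2 := Finset.sum_nonneg fun j _ => sq_nonneg _
      linarith
    · have e1 : Mx = lam kM := hMx.trans hkM
      have e2 : mn = lam km := hmn.trans hkm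
      have hne : kM ≠ km := by
        intro h
        apply hMm
        rw [e1, e2, h]
      have hsum : lam kM ^ 2 + lam km ^ 2 ≤ ∑ j, lam j ^ 2 := by
        have hsub := Finset.sum_le_sum_of_subset_of_nonneg
          (Finset.subset_univ ({kM, km} : Finset k))
          (fun j _ _ => sq_nonneg (lam j))
        rwa [Finset.sum_pair hne] at hsub
      rw [← e1, ← e2] at hsum
      rw [hm]
      nlinarith [hsum, sq_nonneg (Mx + mn)]

end Shift

section CellBound

variable {N : ℕ} {n : Fin N → ℕ}

lemma cell_bound (i : Fin N) [Nonempty (Fin (n i))]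
    (s : Matrix ((j : Fin N) → Fin (n j)) ((j : Fin N) → Fin (n j)) ℂ)
    (hs : s.PosSemidef) (htr : Matrix.trace (s * s) = 1)
    {C : Matrix (Fin (n i)) (Fin (n i)) ℂ} (hC : C.IsHermitian) :
    (Matrix.trace (mComm (localOp n i C) s * (mComm (localOp n i C) s)ᴴ)).re
      ≤ (Matrix.trace (C * C)).re := by
  classical
  obtain ⟨c, m, hpsd, hm⟩ := exists_shift hC
  set C' : Matrix (Fin (n i)) (Fin (n i)) ℂ := C - (c : ℂ) • 1 with hC'def
  have hcs : ((c : ℂ) • (1 : Matrix (Fin (n i)) (Fin (n i)) ℂ)).IsHermitian := by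
    show _ᴴ = _
    rw [Matrix.conjTranspose_smul, Matrix.conjTranspose_one, Complex.star_def,
      Complex.conj_ofReal]
  have hC'h : C'.IsHermitian := hC.sub hcs
  set B : Matrix ((j : Fin N) → Fin (n j)) ((j : Fin N) → Fin (n j)) ℂ
    := localOp n i C' with hBdef
  have hBh : B.IsHermitian := localOp_isHermitian i hC'h
  have hKeq : mComm (localOp n i C) s = mComm B s := by
    have hsplit : localOp n i C = B + (c : ℂ) • 1 := by
      rw [hBdef, hC'def, localOp_sub, localOp_smul, localOp_one, sub_add_cancel]
    rw [hsplit, mComm_add_left, mComm_smul_one, add_zero]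
  rw [hKeq]
  set K := mComm B s with hKdef
  have hKH : Kᴴ = -K := mComm_conjTranspose hBh hs.1
  have expand : Matrix.trace (K * Kᴴ)
      = 2 * Matrix.trace (B * B * (s * s)) - 2 * Matrix.trace (B * s * (B * s)) := by
    rw [hKH, Matrix.mul_neg, Matrix.trace_neg, hKdef]
    simp only [mComm, Matrix.sub_mul, Matrix.mul_sub, Matrix.trace_sub]
    have e1 : Matrix.trace (B * s * (s * B)) = Matrix.trace (B * B * (s * s)) := by
      rw [Matrix.trace_mul_comm (B * s) (s * B)]
      rw [show (s * B) * (B * s) = s * (B * (B * s)) from by simp only [Matrix.mul_assoc]]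
      rw [Matrix.trace_mul_comm s (B * (B * s))]
      simp only [Matrix.mul_assoc]
    have e2 : Matrix.trace (s * B * (B * s)) = Matrix.trace (B * B * (s * s)) := by
      rw [show (s * B) * (B * s) = s * (B * (B * s)) from by simp only [Matrix.mul_assoc]]
      rw [Matrix.trace_mul_comm s (B * (B * s))]
      simp only [Matrix.mul_assoc]
    have e3 : Matrix.trace (s * B * (s * B)) = Matrix.trace (B * s * (B * s)) := by
      rw [show (s * B) * (s * B) = s * (B * (s * B)) from by simp only [Matrix.mul_assoc]]
      rw [Matrix.trace_mul_comm s (B * (s * B))]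
      simp only [Matrix.mul_assoc]
    rw [e1, e2, e3]
    ring
  have hre : (Matrix.trace (K * Kᴴ)).re
      = 2 * (Matrix.trace (B * B * (s * s))).re - 2 * (Matrix.trace (B * s * (B * s))).re := by
    rw [expand]
    simp [Complex.sub_re, Complex.mul_re]
  -- lower bound for the second term
  obtain ⟨r, hrr, hrH⟩ : ∃ r : Matrix ((j : Fin N) → Fin (n j)) ((j : Fin N) → Fin (n j)) ℂ,
      r * r = s ∧ r.IsHermitian := by
    open scoped MatrixOrder in
    exact ⟨CFC.sqrt s, CFC.sqrt_mul_sqrt_self s hs.nonneg, (CFC.sqrt_nonneg s).posSemidef.1⟩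
  have hBsBs : Matrix.trace (B * s * (B * s)) = Matrix.trace ((r * B * r) * (r * B * r)) := by
    have h1 : (r * B * r) * (r * B * r) = r * (B * s * (B * r)) := by
      rw [← hrr]; simp only [Matrix.mul_assoc]
    have h3 : B * s * (B * s) = (B * s * (B * r)) * r := by
      rw [← hrr]; simp only [Matrix.mul_assoc]
    rw [h3, Matrix.trace_mul_comm (B * s * (B * r)) r, h1]
  have hH : (r * B * r).IsHermitian := by
    show _ᴴ = _
    simp only [Matrix.conjTranspose_mul, hrH.eq, hBh.eq, Matrix.mul_assoc]
  have hpos2 : 0 ≤ (Matrix.trace (B * s * (B * s))).re := by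
    have h := trace_mul_conjTranspose_re_nonneg (r * B * r)
    rw [hH.eq] at h
    rwa [hBsBs]
  -- upper bound for the first term
  have hBB : B * B = localOp n i (C' * C') := by rw [hBdef, localOp_mul]
  have hPSD2 : ((m : ℂ) • (1 : Matrix ((j : Fin N) → Fin (n j)) ((j : Fin N) → Fin (n j)) ℂ)
      - B * B).PosSemidef := by
    rw [hBB]
    rw [show (m : ℂ) • (1 : Matrix ((j : Fin N) → Fin (n j)) ((j : Fin N) → Fin (n j)) ℂ)
        - localOp n i (C' * C') = localOp n i ((m : ℂ) • 1 - C' * C') from by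
      rw [localOp_sub, localOp_smul, localOp_one]]
    exact localOp_posSemidef i hpsd
  have hsspsd : (s * s).PosSemidef := by
    have h := Matrix.posSemidef_conjTranspose_mul_self s
    rwa [hs.1.eq] at h
  have h0 := trace_psd_mul_psd_re_nonneg hPSD2 hsspsd
  have hexp : Matrix.trace (((m : ℂ) • (1 : Matrix ((j : Fin N) → Fin (n j))
      ((j : Fin N) → Fin (n j)) ℂ) - B * B) * (s * s))
      = (m : ℂ) - Matrix.trace (B * B * (s * s)) := by
    rw [Matrix.sub_mul, Matrix.trace_sub, smul_mul_assoc, Matrix.one_mul,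
      Matrix.trace_smul, htr, smul_eq_mul, mul_one]
  rw [hexp] at h0
  rw [Complex.sub_re, Complex.ofReal_re] at h0
  -- combine
  rw [hre]
  linarith

end CellBound


end QSAProof

open QSAProof in
/-- **Proposition 2.** For every density matrix `ρ` on the `N`-cell
space `⊗_{i=1}^N ℂ^{n_i}` (with positive-semidefinite square root `s = √ρ`) and
every trace-orthonormal Hermitian local observable set, the quantum state advantage
`Γ_C(ρ)` — the largest eigenvalue of the commutation matrix — is bounded by the
number of cells: `Γ_C(ρ) ≤ N`. -/
theorem quantum_state_advantage_le_cells
    {N : ℕ} {n : Fin N → ℕ}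
    (ρ : Matrix ((j : Fin N) → Fin (n j)) ((j : Fin N) → Fin (n j)) ℂ)
    (hρ : ρ.PosSemidef) (hτ : ρ.trace = 1)
    (s : Matrix ((j : Fin N) → Fin (n j)) ((j : Fin N) → Fin (n j)) ℂ)
    (hs : s.PosSemidef) (hss : s * s = ρ)
    (A : ∀ i : Fin N, Fin (n i ^ 2) → Matrix (Fin (n i)) (Fin (n i)) ℂ)
    (hAh : ∀ i α, (A i α).IsHermitian)
    (hAo : ∀ i α β, Matrix.trace (A i α * A i β) = if α = β then 1 else 0) :
    maxEig (gammaC s (obsFamily n A)) ≤ (N : ℝ) := by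
  classical
  have htrss : Matrix.trace (s * s) = 1 := by rw [hss, hτ]
  have hd : Nonempty ((j : Fin N) → Fin (n j)) := by
    by_contra h
    rw [not_nonempty_iff] at h
    rw [Matrix.trace, Finset.univ_eq_empty, Finset.sum_empty] at hτ
    exact one_ne_zero hτ.symm
  haveI := hd
  have hni : ∀ i : Fin N, Nonempty (Fin (n i)) :=
    fun i => ⟨(Classical.arbitrary ((j : Fin N) → Fin (n j))) i⟩
  refine Real.sSup_le ?_ (Nat.cast_nonneg N)
  rintro x ⟨v, hv, hev⟩
  set W : ℝ := ∑ μ : ((i : Fin N) × Fin (n i ^ 2)), v μ ^ 2 with hW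
  have hWpos : 0 < W := by
    obtain ⟨μ, hμ⟩ := Function.ne_iff.mp hv
    refine Finset.sum_pos' (fun _ _ => sq_nonneg _) ⟨μ, Finset.mem_univ _, ?_⟩
    have hvμ : v μ ≠ 0 := hμ
    positivity
  -- the quadratic form of the eigenvector
  have hqf : x * W = ∑ μ : ((i : Fin N) × Fin (n i ^ 2)), ∑ ν : ((i : Fin N) × Fin (n i ^ 2)),
      v μ * v ν * (-(Matrix.trace (mComm (obsFamily n A μ) s * mComm (obsFamily n A ν) s))).re := by
    have h1 : ∑ μ : ((i : Fin N) × Fin (n i ^ 2)),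
        v μ * ((gammaC s (obsFamily n A)).mulVec v μ) = x * W := by
      rw [hev, hW, Finset.mul_sum]
      refine Finset.sum_congr rfl fun μ _ => ?_
      simp only [Pi.smul_apply, smul_eq_mul]
      ring
    rw [← h1]
    refine Finset.sum_congr rfl fun μ _ => ?_
    rw [show (gammaC s (obsFamily n A)).mulVec v μ
        = ∑ ν : ((i : Fin N) × Fin (n i ^ 2)), gammaC s (obsFamily n A) μ ν * v ν from by
      simp [Matrix.mulVec, dotProduct]]
    rw [Finset.mul_sum]
    refine Finset.sum_congr rfl fun ν _ => ?_
    show v μ * ((-(Matrix.trace (mComm (obsFamily n A μ) s * mComm (obsFamily n A ν) s))).re * v ν)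
        = _
    ring
  -- the global observable and its cell decomposition
  set Bc : (i : Fin N) → Matrix (Fin (n i)) (Fin (n i)) ℂ :=
    fun i => ∑ α : Fin (n i ^ 2), (v ⟨i, α⟩ : ℂ) • A i α with hBc
  have hBch : ∀ i, (Bc i).IsHermitian := fun i => by
    show _ᴴ = _
    rw [hBc, Matrix.conjTranspose_sum]
    refine Finset.sum_congr rfl fun α _ => ?_
    rw [Matrix.conjTranspose_smul, (hAh i α).eq, Complex.star_def, Complex.conj_ofReal]
  set BB : Matrix ((j : Fin N) → Fin (n j)) ((j : Fin N) → Fin (n j)) ℂ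
      := ∑ μ : ((i : Fin N) × Fin (n i ^ 2)), (v μ : ℂ) • obsFamily n A μ with hBB
  have hGlob : BB = ∑ i : Fin N, localOp n i (Bc i) := by
    rw [hBB, ← Finset.univ_sigma_univ, Finset.sum_sigma]
    refine Finset.sum_congr rfl fun i _ => ?_
    rw [hBc, localOp_sum]
    refine Finset.sum_congr rfl fun α _ => ?_
    rw [localOp_smul]
    rfl
  have hBBh : BB.IsHermitian := by
    show _ᴴ = _
    rw [hBB, Matrix.conjTranspose_sum]
    refine Finset.sum_congr rfl fun μ _ => ?_
    rw [Matrix.conjTranspose_smul, Complex.star_def, Complex.conj_ofReal]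
    congr 1
    exact (localOp_isHermitian μ.1 (hAh μ.1 μ.2)).eq
  have hKB : mComm BB s = ∑ μ : ((i : Fin N) × Fin (n i ^ 2)),
      (v μ : ℂ) • mComm (obsFamily n A μ) s := by
    rw [hBB, mComm_sum_left]
    exact Finset.sum_congr rfl fun μ _ => mComm_smul_left _ _ _
  have hKBH : (mComm BB s)ᴴ = -mComm BB s := mComm_conjTranspose hBBh hs.1
  -- the quadratic form equals the squared Frobenius norm of the global commutator
  have key : (Matrix.trace (mComm BB s * (mComm BB s)ᴴ)).re
      = ∑ μ : ((i : Fin N) × Fin (n i ^ 2)), ∑ ν : ((i : Fin N) × Fin (n i ^ 2)),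
        v μ * v ν * (-(Matrix.trace (mComm (obsFamily n A μ) s * mComm (obsFamily n A ν) s))).re := by
    rw [hKBH, Matrix.mul_neg, Matrix.trace_neg, hKB]
    simp only [Finset.sum_mul, Finset.mul_sum, smul_mul_assoc, mul_smul_comm,
      Matrix.trace_sum, Matrix.trace_smul, smul_smul, smul_eq_mul]
    rw [Complex.neg_re, Complex.re_sum, ← Finset.sum_neg_distrib]
    refine Finset.sum_congr rfl fun μ _ => ?_
    rw [Complex.re_sum, ← Finset.sum_neg_distrib]
    refine Finset.sum_congr rfl fun ν _ => ?_
    rw [Matrix.trace_mul_comm, ← mul_assoc, ← Complex.ofReal_mul, Complex.re_ofReal_mul,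
      Complex.neg_re]
    ring
  -- per-cell bound on the commutators
  have hTle : ∀ i : Fin N,
      (Matrix.trace (mComm (localOp n i (Bc i)) s * (mComm (localOp n i (Bc i)) s)ᴴ)).re
        ≤ ∑ α : Fin (n i ^ 2), v ⟨i, α⟩ ^ 2 := by
    intro i
    have := hni i
    refine (cell_bound i s hs htrss (hBch i)).trans_eq ?_
    have htr2 : Matrix.trace (Bc i * Bc i)
        = ∑ α : Fin (n i ^ 2), ((v ⟨i, α⟩ : ℂ) * (v ⟨i, α⟩ : ℂ)) := by
      rw [hBc]
      simp only [Finset.sum_mul, Finset.mul_sum, smul_mul_assoc, mul_smul_comm,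
        Matrix.trace_sum, Matrix.trace_smul, smul_smul, smul_eq_mul]
      simp [hAo, mul_ite, mul_one, mul_zero, Finset.sum_ite_eq]
    rw [htr2, Complex.re_sum]
    refine Finset.sum_congr rfl fun α _ => ?_
    rw [← Complex.ofReal_mul, Complex.ofReal_re, sq]
  -- Frobenius-norm chain of inequalities
  have hsumK : mComm BB s = ∑ i : Fin N, mComm (localOp n i (Bc i)) s := by
    rw [hGlob, mComm_sum_left]
  have hfro : (Matrix.trace (mComm BB s * (mComm BB s)ᴴ)).re ≤ (N : ℝ) * W :=
    calc (Matrix.trace (mComm BB s * (mComm BB s)ᴴ)).re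
        = ‖toEuc (mComm BB s)‖ ^ 2 := (toEuc_norm_sq _).symm
      _ = ‖∑ i : Fin N, toEuc (mComm (localOp n i (Bc i)) s)‖ ^ 2 := by
          rw [hsumK, toEuc_sum]
      _ ≤ (∑ i : Fin N, ‖toEuc (mComm (localOp n i (Bc i)) s)‖) ^ 2 := by
          refine pow_le_pow_left₀ (norm_nonneg _) ?_ 2
          exact norm_sum_le _ _
      _ ≤ (N : ℝ) * ∑ i : Fin N, ‖toEuc (mComm (localOp n i (Bc i)) s)‖ ^ 2 := by
          have h := sq_sum_le_card_mul_sum_sq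
            (s := (Finset.univ : Finset (Fin N)))
            (f := fun i => ‖toEuc (mComm (localOp n i (Bc i)) s)‖)
          simpa using h
      _ ≤ (N : ℝ) * ∑ i : Fin N, (∑ α : Fin (n i ^ 2), v ⟨i, α⟩ ^ 2) := by
          refine mul_le_mul_of_nonneg_left ?_ (Nat.cast_nonneg N)
          refine Finset.sum_le_sum fun i _ => ?_
          rw [toEuc_norm_sq]
          exact hTle i
      _ = (N : ℝ) * W := by
          rw [hW, ← Finset.univ_sigma_univ, Finset.sum_sigma]
  have hfin : x * W ≤ (N : ℝ) * W := by
    rw [hqf, ← key]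
    exact hfro
  nlinarith [hfin, hWpos]
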